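/- Let G be a finite connected graph and w, w' : E → {0,…,|E|−1} with w' ≤ w pointwise. Then Ψ(w') ≤ Ψ(w) pointwise, where Ψ(w) = Φ(QFZ(G,w)); i.e., the saliency map operator is increasing. -/

import Mathlib

open SimpleGraph

variable {V : Type*}

/-- `P'` refines `P`: every region of `P'` is contained in a region of `P`. -/
def Refines (P' P : Set (Set V)) : Prop := ∀ R ∈ P', ∃ S ∈ P, R ⊆ S

/-- `x` and `y` lie in the same region of `P`. -/
def SameRegion (P : Set (Set V)) (x y : V) : Prop := ∃ R ∈ P, x ∈ R ∧ y ∈ R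

/-- The cut of a partition `P` for the graph `G`. -/
def cutOf (G : SimpleGraph V) (P : Set (Set V)) : Set (Sym2 V) :=
  {e | e ∈ G.edgeSet ∧ ∀ x y : V, e = s(x, y) → ¬ SameRegion P x y}

/-- The `lam`-level partition of a subgraph `X`: connected components of the
`lam`-level graph `(V(X), {u ∈ E(X) : w u < lam})`, as a set of regions. -/
def levelPartition {G : SimpleGraph V} (X : G.Subgraph) {α : Type*} [LT α]
    (w : Sym2 V → α) (lam : α) : Set (Set V) :=
  {S | ∃ x ∈ X.verts,
    S = {y | Relation.ReflTransGen (fun a b => X.Adj a b ∧ w s(a, b) < lam) x y}}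

/-- The `lam`-level partition of the graph `G` itself (quasi-flat zones at level `lam`). -/
def qfz (G : SimpleGraph V) (w : Sym2 V → ℕ) (lam : ℕ) : Set (Set V) :=
  {S | ∃ x : V,
    S = {y | Relation.ReflTransGen (fun a b => G.Adj a b ∧ w s(a, b) < lam) x y}}

/-- `(P₀, …, P_l)` is a complete hierarchy on `V`. -/
def IsCompleteHierarchy (P : ℕ → Set (Set V)) (l : ℕ) : Prop :=
  (∀ i ≤ l, Setoid.IsPartition (P i)) ∧
  (∀ i, 1 ≤ i → i ≤ l → Refines (P (i - 1)) (P i)) ∧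
  (P 0 = {S | ∃ x : V, S = {x}}) ∧
  (P l = {Set.univ})

/-- A complete hierarchy all of whose regions induce connected subgraphs of `G`. -/
def IsConnectedHierarchy (G : SimpleGraph V) (P : ℕ → Set (Set V)) (l : ℕ) : Prop :=
  IsCompleteHierarchy P l ∧ ∀ i ≤ l, ∀ S ∈ P i, (G.induce S).Connected

/-- The saliency map of the hierarchy `(P₀, …, P_l)`:
`Φ(H)(u) = max {lam ≤ l : u ∈ φ(P lam)}`. -/
noncomputable def saliency (G : SimpleGraph V) (P : ℕ → Set (Set V)) (l : ℕ)
    (e : Sym2 V) : ℕ :=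
  sSup {lam | lam ≤ l ∧ e ∈ cutOf G (P lam)}

/-- `w` is a saliency map on `G`: the saliency map of some connected complete
hierarchy of depth `|E|`. -/
def IsSaliencyMap (G : SimpleGraph V) [Fintype G.edgeSet] (w : Sym2 V → ℕ) : Prop :=
  ∃ P : ℕ → Set (Set V), IsConnectedHierarchy G P G.edgeFinset.card ∧
    ∀ e ∈ G.edgeSet, w e = saliency G P G.edgeFinset.card e

/-- Total weight of a subgraph. -/
noncomputable def sgWeight [Fintype V] {G : SimpleGraph V} {α : Type*}
    [AddCommMonoid α] (X : G.Subgraph) (w : Sym2 V → α) : α :=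
  ∑ e ∈ (Set.toFinite X.edgeSet).toFinset, w e

/-- `X` is a minimum spanning tree of `(G, w)`. -/
def IsMST [Fintype V] {G : SimpleGraph V} {α : Type*} [AddCommMonoid α] [Preorder α]
    (X : G.Subgraph) (w : Sym2 V → α) : Prop :=
  X.verts = Set.univ ∧ X.Connected ∧
  ∀ Y : G.Subgraph, Y.verts = Set.univ → Y.Connected → sgWeight X w ≤ sgWeight Y w

/-- the operator `Ψ = Φ ∘ QFZ(G, ·)` is increasing. -/
theorem saliency_operator_increasing [Fintype V] (G : SimpleGraph V)
    [Fintype G.edgeSet] (hG : G.Connected) (w w' : Sym2 V → ℕ)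
    (hw : ∀ e ∈ G.edgeSet, w e < G.edgeFinset.card)
    (hw' : ∀ e ∈ G.edgeSet, w' e < G.edgeFinset.card)
    (hle : ∀ e ∈ G.edgeSet, w' e ≤ w e) :
    ∀ e ∈ G.edgeSet,
      saliency G (qfz G w') G.edgeFinset.card e ≤
        saliency G (qfz G w) G.edgeFinset.card e := by
  intro e he
  unfold saliency
  -- key: SameRegion (qfz G w lam) x y → SameRegion (qfz G w' lam) x y
  have key : ∀ lam x y, SameRegion (qfz G w lam) x y → SameRegion (qfz G w' lam) x y := by
    intro lam x y ⟨R, ⟨z, hR⟩, hx, hy⟩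
    subst hR
    have mono : ∀ a b, (fun a b => G.Adj a b ∧ w s(a, b) < lam) a b →
        (fun a b => G.Adj a b ∧ w' s(a, b) < lam) a b := by
      intro a b ⟨hab, hlt⟩
      exact ⟨hab, lt_of_le_of_lt (hle _ hab) hlt⟩
    exact ⟨{t | Relation.ReflTransGen (fun a b => G.Adj a b ∧ w' s(a, b) < lam) z t},
      ⟨z, rfl⟩, Relation.ReflTransGen.mono mono _ _ hx, Relation.ReflTransGen.mono mono _ _ hy⟩
  have hsub : {lam | lam ≤ G.edgeFinset.card ∧ e ∈ cutOf G (qfz G w' lam)} ⊆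
      {lam | lam ≤ G.edgeFinset.card ∧ e ∈ cutOf G (qfz G w lam)} := by
    rintro lam ⟨hl, hmem, hcut⟩
    exact ⟨hl, hmem, fun x y hxy hsr => hcut x y hxy (key lam x y hsr)⟩
  rcases Set.eq_empty_or_nonempty
      {lam | lam ≤ G.edgeFinset.card ∧ e ∈ cutOf G (qfz G w' lam)} with h | h
  · rw [h, csSup_empty]; exact Nat.zero_le _
  · exact csSup_le_csSup ⟨G.edgeFinset.card, fun lam hl => hl.1⟩ h hsub
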